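/- Failure of reflexivity under unawareness: in any probabilistic awareness structure, if the language L(s) of a state s contains a real primitive proposition of which agent i is unaware (i.e., there exists p ∈ L(s) ∩ Φ with p ∉ A_i(s)), then s ∉ K_i(s), i.e., agent i does not consider the state s itself possible at s. -/

import Mathlib

namespace DynAwareness

/-- Primitive propositions: `Sum.inl n` are the "real" primitive propositions (Φ),
`Sum.inr n` are the "shadow" propositions (Φ'). Φ⁺ is the whole type. -/
abbrev PProp : Type := ℕ ⊕ ℕ

def realProps : Set PProp := Set.range Sum.inl
def shadowProps : Set PProp := Set.range Sum.inr

/-- A probabilistic awareness structure for agents in `ι` over Φ⁺. -/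
structure PAS (ι : Type) where
  S : Type
  finS : Finite S
  pi : S → PProp → Bool
  K : ι → S → S → Prop
  A : ι → S → Set PProp
  PR : ι → S → Set S → ℝ
  L : S → Set PProp
  K_eucl : ∀ i s t u, K i s t → K i s u → K i t u
  K_trans : ∀ i s t u, K i s t → K i t u → K i s u
  K_serial : ∀ i s, ∃ t, K i s t
  PR_nonneg : ∀ i s E, 0 ≤ PR i s E
  PR_empty : ∀ i s, PR i s (∅ : Set S) = 0
  PR_add : ∀ i s E F, Disjoint E F → PR i s (E ∪ F) = PR i s E + PR i s F
  PR_univ : ∀ i s, PR i s Set.univ = 1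
  PR_K : ∀ i s, PR i s {t | K i s t} = 1
  PR_inv : ∀ i s t, K i s t → PR i t = PR i s
  A_inv : ∀ i s t, K i s t → A i t = A i s
  A_sub_L : ∀ i s, A i s ⊆ L s
  L_K : ∀ i s t, K i s t → L t ⊆ A i s ∪ shadowProps

/-- Formulas of the language L^{∀,X,ℓ,A}_n (together with the consistency
formulas `consis φ i`).  A likelihood formula
`a_1 ℓ_i(φ_1) + ⋯ + a_k ℓ_i(φ_k) > b` is `lik i k a φs b`. -/
inductive Formula (ι : Type) : Type
  | var : ℕ → Formula ι
  | prim : PProp → Formula ι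
  | neg : Formula ι → Formula ι
  | conj : Formula ι → Formula ι → Formula ι
  | aw : ι → Formula ι → Formula ι
  | kn : ι → Formula ι → Formula ι
  | lik : ι → (k : ℕ) → (Fin k → ℚ) → (Fin k → Formula ι) → ℚ → Formula ι
  | all : ℕ → Formula ι → Formula ι
  | consis : Formula ι → ι → Formula ι

namespace Formula

variable {ι : Type}

/-- prop(φ): the primitive propositions occurring in φ. -/
def props : Formula ι → Set PProp
  | .var _ => ∅
  | .prim p => {p}
  | .neg φ => φ.props
  | .conj φ ψ => φ.props ∪ ψ.props
  | .aw _ φ => φ.props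
  | .kn _ φ => φ.props
  | .lik _ _ _ φs _ => ⋃ j, (φs j).props
  | .all _ φ => φ.props
  | .consis _ _ => ∅

/-- Simultaneous substitution of formulas for free variables. -/
def subst (σ : ℕ → Formula ι) : Formula ι → Formula ι
  | .var n => σ n
  | .prim p => .prim p
  | .neg φ => .neg (φ.subst σ)
  | .conj φ ψ => .conj (φ.subst σ) (ψ.subst σ)
  | .aw i φ => .aw i (φ.subst σ)
  | .kn i φ => .kn i (φ.subst σ)
  | .lik i k a φs b => .lik i k a (fun j => (φs j).subst σ) b
  | .all x φ => .all x (φ.subst (Function.update σ x (.var x)))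
  | .consis φ i => .consis (φ.subst σ) i

/-- φ[x/χ]: substitute χ for the free occurrences of the variable x in φ. -/
def subst1 (x : ℕ) (χ : Formula ι) (φ : Formula ι) : Formula ι :=
  φ.subst (Function.update Formula.var x χ)

/-- Quantifier-free sentences of the (static) language: no variables, no
quantifiers (and no consistency formulas). -/
def qfSent : Formula ι → Prop
  | .var _ => False
  | .prim _ => True
  | .neg φ => φ.qfSent
  | .conj φ ψ => φ.qfSent ∧ ψ.qfSent
  | .aw _ φ => φ.qfSent
  | .kn _ φ => φ.qfSent
  | .lik _ _ _ φs _ => ∀ j, (φs j).qfSent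
  | .all _ _ => False
  | .consis _ _ => False

/-- Formulas of the static language L^{∀,X,ℓ,A}_n(Φ): built from primitive
propositions in Φ (no consistency formulas). -/
def static : Formula ι → Prop
  | .var _ => True
  | .prim p => p ∈ realProps
  | .neg φ => φ.static
  | .conj φ ψ => φ.static ∧ ψ.static
  | .aw _ φ => φ.static
  | .kn _ φ => φ.static
  | .lik _ _ _ φs _ => ∀ j, (φs j).static
  | .all _ φ => φ.static
  | .consis _ _ => False

/-- Material implication (abbreviation). -/
def imp (φ ψ : Formula ι) : Formula ι := .neg (.conj φ (.neg ψ))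

/-- ∃x φ abbreviates ¬∀x¬φ. -/
def exis (x : ℕ) (φ : Formula ι) : Formula ι := .neg (.all x (.neg φ))

/-- ℓ_i(φ) > b, as a likelihood formula with a single term. -/
def likGt (i : ι) (φ : Formula ι) (b : ℚ) : Formula ι :=
  .lik i 1 (fun _ => 1) (fun _ => φ) b

/-- a₁ℓ_i(φ₁) + a₂ℓ_i(φ₂) > b, as a likelihood formula with two terms. -/
def lik2 (i : ι) (a₁ : ℚ) (φ₁ : Formula ι) (a₂ : ℚ) (φ₂ : Formula ι) (b : ℚ) : Formula ι :=
  .lik i 2 ![a₁, a₂] ![φ₁, φ₂] b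

end Formula

variable {ι : Type}

/-- A state t is consistent with i becoming aware of φ: L(t) contains at least
as many shadow propositions of which i is unaware as there are primitive
propositions of φ of which i is unaware. -/
def consistentWith (M : PAS ι) (φ : Formula ι) (i : ι) (t : M.S) : Prop :=
  ∃ g : (φ.props \ M.A i t : Set PProp) → ((M.L t ∩ shadowProps) \ M.A i t : Set PProp),
    Function.Injective g

/-- cons(M,φ,i): the set of states consistent with i becoming aware of φ. -/
def consSet (M : PAS ι) (φ : Formula ι) (i : ι) : Set M.S :=
  {t | consistentWith M φ i t}

/-- Truth for quantifier-free sentences (no free variables occur, so no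
environment is needed). -/
def TruthQF (M : PAS ι) : Formula ι → M.S → Prop
  | .var _, _ => False
  | .prim p, s => p ∈ M.L s ∧ M.pi s p = true
  | .neg φ, s => φ.props ⊆ M.L s ∧ ¬ TruthQF M φ s
  | .conj φ ψ, s => TruthQF M φ s ∧ TruthQF M ψ s
  | .aw i φ, s => φ.props ⊆ M.A i s
  | .kn i φ, s => φ.props ⊆ M.A i s ∧ ∀ t, M.K i s t → TruthQF M φ t
  | .lik i k a φs b, s =>
      (⋃ j, (φs j).props) ⊆ M.A i s ∧
      (b : ℝ) < ∑ j : Fin k, ((a j : ℝ) * M.PR i s ({t | TruthQF M (φs j) t} ∩ {t | M.K i s t}))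
  | .all _ _, _ => False
  | .consis φ i, s => consistentWith M φ i s

/-- Truth of a formula at a state, relative to an environment σ assigning
(quantifier-free sentences to) the variables. -/
def Truth (M : PAS ι) : (ℕ → Formula ι) → Formula ι → M.S → Prop
  | σ, .var n, s => TruthQF M (σ n) s
  | _, .prim p, s => p ∈ M.L s ∧ M.pi s p = true
  | σ, .neg φ, s => (φ.subst σ).props ⊆ M.L s ∧ ¬ Truth M σ φ s
  | σ, .conj φ ψ, s => Truth M σ φ s ∧ Truth M σ ψ s
  | σ, .aw i φ, s => (φ.subst σ).props ⊆ M.A i s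
  | σ, .kn i φ, s => (φ.subst σ).props ⊆ M.A i s ∧ ∀ t, M.K i s t → Truth M σ φ t
  | σ, .lik i k a φs b, s =>
      (⋃ j, ((φs j).subst σ).props) ⊆ M.A i s ∧
      (b : ℝ) < ∑ j : Fin k, ((a j : ℝ) * M.PR i s ({t | Truth M σ (φs j) t} ∩ {t | M.K i s t}))
  | σ, .all x φ, s =>
      ∀ ψ : Formula ι, ψ.qfSent → ψ.props ⊆ M.L s → Truth M (Function.update σ x ψ) φ s
  | σ, .consis φ i, s => consistentWith M (φ.subst σ) i s

/-- (M,s) ⊨ φ (sentences do not depend on the environment). -/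
def Sat (M : PAS ι) (s : M.S) (φ : Formula ι) : Prop :=
  Truth M Formula.var φ s

/-- [[φ]]_M -/
def intension (M : PAS ι) (φ : Formula ι) : Set M.S := {s | Sat M s φ}

/-- A φ-replacement scheme. -/
def IsRS (φ : Formula ι) (f : PProp → PProp) : Prop :=
  (∀ p, p ∉ φ.props → f p = p) ∧ Set.InjOn f φ.props

/-- A φ-replacement scheme compatible with i becoming aware of φ at s. -/
def CompatRS (M : PAS ι) (φ : Formula ι) (i : ι) (s : M.S) (f : PProp → PProp) : Prop :=
  IsRS φ f ∧ (∀ p ∈ φ.props ∩ M.A i s, f p = p) ∧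
    f '' (φ.props \ M.A i s) ⊆ (M.L s ∩ shadowProps) \ M.A i s

/-- RS(φ) = {id} ∪ ∪_{i,s} RS(φ,i,s). -/
def memRS (M : PAS ι) (φ : Formula ι) (f : PProp → PProp) : Prop :=
  f = id ∨ ∃ (i : ι) (s : M.S), CompatRS M φ i s f

/-- t' (a state of M') is an f-replacement of t (a state of M). -/
def IsFRepl (M M' : PAS ι) (f : PProp → PProp) (t : M.S) (t' : M'.S) : Prop :=
  f '' M'.L t' = M.L t ∧ ∀ p ∈ M'.L t', M'.pi t' p = M.pi t (f p)

/-- A situation: a model together with a state. -/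
structure Situation (ι : Type) where
  M : PAS ι
  s : M.S

/-- A transition rule maps a situation, a formula and an agent to a situation. -/
abbrev TransitionRule (ι : Type) := Situation ι → Formula ι → ι → Situation ι

/-- rep(t') relative to a relation T: all states related by T to t' via some
replacement scheme. -/
def repSet {M M' : PAS ι} (T : M.S → M'.S → (PProp → PProp) → Prop) (t' : M.S) : Set M'.S :=
  {u | ∃ f, T t' u f}

/-- Conditions T1–T4 on the relation T witnessing that (M',s') is an acceptable
update of (M,s) when i becomes aware of φ. -/
def GoodT (M : PAS ι) (s : M.S) (φ : Formula ι) (i : ι) (M' : PAS ι) (s' : M'.S)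
    (T : M.S → M'.S → (PProp → PProp) → Prop) : Prop :=
  -- T ⊆ S × S' × RS(φ)
  (∀ t t' f, T t t' f → memRS M φ f) ∧
  -- T1
  (∀ u : M'.S,
    (∃ t f, T t u f) ∧
    (∀ t₁ f₁ t₂ f₂, T t₁ u f₁ → T t₂ u f₂ → t₁ = t₂ ∧ f₁ = f₂) ∧
    (∀ t f, T t u f → IsFRepl M M' f t u)) ∧
  -- T2
  (T s s' id ∧ M'.A i s' = M.A i s ∪ φ.props ∧ ∀ j, j ≠ i → M'.A j s' = M.A j s) ∧
  -- T3
  (∀ t t' f, T t t' f → (M.K i s t ∨ t = s) → (f ≠ id ∨ (t' = s' ∧ f = id)) →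
    M.PR i s (consSet M φ i) ≠ 0 →
    (({u | M'.K i t' u} =
        {u | ∃ t₀ f₀, (M.K i s t₀ ∧ t₀ ∈ consSet M φ i) ∧ CompatRS M φ i s f₀ ∧ T t₀ u f₀}) ∧
     (∀ t₀, M.K i s t₀ → t₀ ∈ consSet M φ i →
        M'.PR i t' (repSet T t₀ ∩ {u | M'.K i t' u}) =
          M.PR i s {t₀} / M.PR i s (consSet M φ i)) ∧
     (∀ j, j ≠ i → f '' M'.A j t' = M.A j t))) ∧
  -- T4
  (∀ t t' f, T t t' f → ∀ j,
    (j ≠ i ∨ ¬ (M.K i s t ∨ t = s) ∨ (f = id ∧ t' ≠ s')) →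
    (f '' M'.A j t' = M.A j t ∧
     (∀ t₀, M.K j t t₀ → ∃ u, u ≠ s' ∧ T t₀ u f) ∧
     ({u | M'.K j t' u} = {u | ∃ t₀, M.K j t t₀ ∧ T t₀ u f ∧ u ≠ s'}) ∧
     (∀ t₀, M.K j t t₀ →
        M'.PR j t' (repSet T t₀ ∩ {u | M'.K i t' u}) = M.PR j s {t₀})))

/-- An acceptable transition rule. -/
def Acceptable (τ : TransitionRule ι) : Prop :=
  ∀ (M : PAS ι) (s : M.S) (φ : Formula ι) (i : ι), φ.props ⊆ M.L s →
    ((φ.props ⊆ M.A i s → τ ⟨M, s⟩ φ i = ⟨M, s⟩) ∧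
     (¬ φ.props ⊆ M.A i s →
       ∃ T : M.S → (τ ⟨M, s⟩ φ i).M.S → (PProp → PProp) → Prop,
         GoodT M s φ i (τ ⟨M, s⟩ φ i).M (τ ⟨M, s⟩ φ i).s T))

/-- Failure of reflexivity under unawareness: if L(s) contains a real primitive
proposition of which agent i is unaware, then s ∉ K_i(s). -/
theorem not_refl_of_unaware {ι : Type} (M : PAS ι) (i : ι) (s : M.S)
    (h : ∃ p ∈ M.L s, p ∈ realProps ∧ p ∉ M.A i s) :
    ¬ M.K i s s := by
  rintro hK
  obtain ⟨p, hpL, ⟨n, hn⟩, hpA⟩ := h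
  have := M.L_K i s s hK hpL
  rcases this with h1 | ⟨m, hm⟩
  · exact hpA h1
  · rw [← hn] at hm; cases hm

end DynAwareness
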